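/- In the weak mixed formulation, if the pair (F, ζ) satisfies the F-equation ∫ γ·∂F/∂t + ∫ γ·(ζ v^⊥) − (1/2)∫ (v·F)(∇·γ) + G'(F; γ) = 0 for all γ in a space V_F that contains −∇^⊥η for every η ∈ V_ζ, then ζ' := the weak vorticity defined by ∫ η ζ' = −∫ ∇^⊥η · F satisfies the weak vorticity evolution equation ∫ η ∂ζ'/∂t − ∫ ∇η·(ζ v) − G'(F; ∇^⊥η) = 0 for all η ∈ V_ζ. -/

import Mathlib

open MeasureTheory

noncomputable def pdx (f : ℝ × ℝ → ℝ) (p : ℝ × ℝ) : ℝ := fderiv ℝ f p (1, 0)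

noncomputable def pdy (f : ℝ × ℝ → ℝ) (p : ℝ × ℝ) : ℝ := fderiv ℝ f p (0, 1)

/-- Dot product on `ℝ²`. -/
def dotP (a b : ℝ × ℝ) : ℝ := a.1 * b.1 + a.2 * b.2

/-- `∇η`. -/
noncomputable def gradf (η : ℝ × ℝ → ℝ) (p : ℝ × ℝ) : ℝ × ℝ := (pdx η p, pdy η p)

/-- `∇^⊥η = (−∂_y η, ∂_x η)`. -/
noncomputable def perpGrad (η : ℝ × ℝ → ℝ) (p : ℝ × ℝ) : ℝ × ℝ := (-(pdy η p), pdx η p)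

/-- `v^⊥ = (−v_y, v_x)`. -/
def perpV (a : ℝ × ℝ) : ℝ × ℝ := (-a.2, a.1)

/-- Divergence of a planar vector field. -/
noncomputable def divg (w : ℝ × ℝ → ℝ × ℝ) (p : ℝ × ℝ) : ℝ :=
  pdx (fun q => (w q).1) p + pdy (fun q => (w q).2) p

lemma mixed_symm (η : ℝ × ℝ → ℝ) (hη : ContDiff ℝ 2 η) (p : ℝ × ℝ) :
    pdx (fun q => pdy η q) p = pdy (fun q => pdx η q) p := by
  have hd : DifferentiableAt ℝ (fderiv ℝ η) p := by
    have : ContDiff ℝ 1 (fderiv ℝ η) := hη.fderiv_right (m := 1) (by norm_num)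
    exact (this.differentiable (by norm_num)).differentiableAt
  have key : ∀ a b : ℝ × ℝ,
      fderiv ℝ (fun q => fderiv ℝ η q a) p b = fderiv ℝ (fderiv ℝ η) p b a := by
    intro a b
    have h := fderiv_clm_apply (c := fderiv ℝ η) (u := fun _ => a) hd
      (differentiableAt_const a)
    simp [fderiv_const] at h
    rw [h]
    simp
  have hsymm := (hη.contDiffAt (x := p)).isSymmSndFDerivAt (by norm_num)
  have h2 := hsymm (1, 0) (0, 1)
  simpa [pdx, pdy, key] using (key (0,1) (1,0)).trans (h2.trans (key (1,0) (0,1)).symm)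

lemma divg_neg_perpGrad (η : ℝ × ℝ → ℝ) (hη : ContDiff ℝ 2 η) (p : ℝ × ℝ) :
    divg (fun q => -(perpGrad η q)) p = 0 := by
  have h := mixed_symm η hη p
  have h1 : (fun q => (-(perpGrad η q)).1) = fun q => pdy η q := by
    funext q; simp [perpGrad]
  have h2 : (fun q => (-(perpGrad η q)).2) = fun q => -(pdx η q) := by
    funext q; simp [perpGrad]
  unfold divg
  rw [h1, h2]
  have h3 : pdy (fun q => -(pdx η q)) p = -pdy (fun q => pdx η q) p := by
    unfold pdy
    rw [fderiv_fun_neg]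
    simp
  rw [h3, h]
  ring

/-- In the weak mixed formulation on a closed domain: if `(F, ζ)` satisfies the
`F`-equation for all test functions `γ` in a space `V_F` containing `−∇^⊥η` for
every `η ∈ V_ζ`, then the weak vorticity `ζ'` of `F` (defined by
`∫ η ζ' = −∫ ∇^⊥η · F`) satisfies the weak vorticity evolution equation
`∫ η ∂ζ'/∂t − ∫ ∇η·(ζ v) − G'(F; ∇^⊥η) = 0` for all `η ∈ V_ζ`. -/
theorem weak_vorticity_consistency
    (μ : Measure (ℝ × ℝ))
    (VF : Set ((ℝ × ℝ) → ℝ × ℝ)) (Vζ : Set ((ℝ × ℝ) → ℝ))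
    (F Ft : ℝ → (ℝ × ℝ) → ℝ × ℝ)            -- transported field and its time derivative
    (ζ : ℝ → (ℝ × ℝ) → ℝ)                    -- prognostic vorticity
    (ζ' ζ't : ℝ → (ℝ × ℝ) → ℝ)               -- weak vorticity of F and its time derivative
    (v : (ℝ × ℝ) → ℝ × ℝ)                    -- transporting velocity
    (G' : ((ℝ × ℝ) → ℝ × ℝ) → ((ℝ × ℝ) → ℝ × ℝ) → ℝ)
    -- G' is linear (odd) in its test-function argument:
    (hG'neg : ∀ Fa w, G' Fa (fun p => -(w p)) = -(G' Fa w))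
    -- test functions are C² and −∇^⊥η belongs to V_F for η ∈ V_ζ:
    (hη : ∀ η ∈ Vζ, ContDiff ℝ 2 η)
    (hmem : ∀ η ∈ Vζ, (fun p => -(perpGrad η p)) ∈ VF)
    -- weak definition of the vorticity ζ' of F, at every time:
    (hweak : ∀ t, ∀ η ∈ Vζ,
      ∫ p, η p * ζ' t p ∂μ = -∫ p, dotP (perpGrad η p) (F t p) ∂μ)
    -- differentiation under the integral sign (Ft, ζ't are the weak time derivatives):
    (hdζ' : ∀ η ∈ Vζ, ∀ t, HasDerivAt (fun s => ∫ p, η p * ζ' s p ∂μ)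
      (∫ p, η p * ζ't t p ∂μ) t)
    (hdF : ∀ η ∈ Vζ, ∀ t, HasDerivAt (fun s => ∫ p, dotP (perpGrad η p) (F s p) ∂μ)
      (∫ p, dotP (perpGrad η p) (Ft t p) ∂μ) t)
    -- the weak F-equation, for all test functions γ ∈ V_F:
    (hFeq : ∀ t, ∀ γ ∈ VF,
      (∫ p, dotP (γ p) (Ft t p) ∂μ)
        + (∫ p, dotP (γ p) (ζ t p • perpV (v p)) ∂μ)
        - (1/2) * (∫ p, dotP (v p) (F t p) * divg γ p ∂μ)
        + G' (F t) γ = 0) :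
    ∀ t, ∀ η ∈ Vζ,
      (∫ p, η p * ζ't t p ∂μ)
        - (∫ p, dotP (gradf η p) (ζ t p • v p) ∂μ)
        - G' (F t) (fun p => perpGrad η p) = 0 := by
  intro t η hηV
  have hC2 := hη η hηV
  have heq := hFeq t _ (hmem η hηV)
  -- time-derivative identity: ∫ η ζ't = -∫ perpGrad η · Ft
  have hderiv : (∫ p, η p * ζ't t p ∂μ) = -∫ p, dotP (perpGrad η p) (Ft t p) ∂μ := by
    have h1 := hdζ' η hηV t
    have h2 := (hdF η hηV t).neg
    have hfun : (fun s => ∫ p, η p * ζ' s p ∂μ)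
        = fun s => -∫ p, dotP (perpGrad η p) (F s p) ∂μ := by
      funext s; exact hweak s η hηV
    rw [hfun] at h1
    exact h1.unique h2
  -- term-by-term rewrites of heq
  have e2 : (∫ p, dotP ((fun q => -(perpGrad η q)) p) (ζ t p • perpV (v p)) ∂μ)
      = -∫ p, dotP (gradf η p) (ζ t p • v p) ∂μ := by
    rw [← integral_neg]
    congr 1; funext p
    simp [dotP, perpGrad, gradf, perpV, Prod.smul_def, smul_eq_mul]
    try ring
  have e3 : (∫ p, dotP (v p) (F t p) * divg (fun q => -(perpGrad η q)) p ∂μ) = 0 := by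
    have : (fun p => dotP (v p) (F t p) * divg (fun q => -(perpGrad η q)) p)
        = fun _ => (0:ℝ) := by
      funext p; rw [divg_neg_perpGrad η hC2 p]; ring
    rw [this, integral_zero]
  have e4 : G' (F t) (fun q => -(perpGrad η q)) = -G' (F t) (fun p => perpGrad η p) :=
    hG'neg (F t) (fun p => perpGrad η p)
  -- heq has dotP applied as (γ p); normalize
  simp only [e2, e3, e4] at heq
  have e1' : (∫ p, dotP (-(perpGrad η p)) (Ft t p) ∂μ)
      = -∫ p, dotP (perpGrad η p) (Ft t p) ∂μ := by
    rw [← integral_neg]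
    congr 1; funext p; simp [dotP]; ring
  rw [e1'] at heq
  rw [hderiv]
  linarith
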